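/- For every real w with 1 < w ≤ 3, one has ψ((w+1)/2) - ψ(w/2) < 1/w + 2/(w(w+1)), where ψ is the digamma function. -/

import Mathlib

open Real Set

/-- The digamma function `ψ = (log ∘ Γ)'`. -/
noncomputable def digamma (t : ℝ) : ℝ := deriv (fun s => Real.log (Real.Gamma s)) t

lemma dg_diffAt {x : ℝ} (hx : 0 < x) :
    DifferentiableAt ℝ (fun s => Real.log (Real.Gamma s)) x := by
  refine ((Real.differentiableAt_Gamma ?_).log (Real.Gamma_ne_zero ?_)) <;>
    exact fun m => ne_of_gt (by linarith [neg_nonpos.mpr (Nat.cast_nonneg (α := ℝ) m)])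

lemma dg_rec {x : ℝ} (hx : 0 < x) : digamma (x + 1) = digamma x + 1 / x := by
  unfold digamma
  rw [← deriv_comp_add_const, one_div, ← Real.deriv_log,
    ← deriv_fun_add (dg_diffAt hx) (Real.differentiableAt_log hx.ne')]
  apply Filter.EventuallyEq.deriv_eq
  filter_upwards [eventually_gt_nhds hx] with t ht
  rw [Real.Gamma_add_one ht.ne', Real.log_mul ht.ne' (Real.Gamma_pos_of_pos ht).ne', add_comm]

lemma dg_convex : ConvexOn ℝ (Ioi 0) fun s => Real.log (Real.Gamma s) := by
  simpa [Function.comp_def] using Real.convexOn_log_Gamma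

lemma dg_diff_le {y : ℝ} (hy : 1 / 2 < y) :
    digamma (y + 1 / 2) - digamma y ≤ 1 / (y - 1 / 2) := by
  have h0 : (0:ℝ) < y := by linarith
  have h1 : digamma (y + 1 / 2) ≤ slope (fun s => Real.log (Real.Gamma s)) (y + 1/2) (y + 1) :=
    dg_convex.deriv_le_slope (by simp; linarith) (by simp; linarith) (by linarith)
      (dg_diffAt (by linarith))
  have h2 : slope (fun s => Real.log (Real.Gamma s)) (y - 1/2) y ≤ digamma y :=
    dg_convex.slope_le_deriv (by simp; linarith) (by simp; linarith) (by linarith)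
      (dg_diffAt h0)
  rw [slope_def_field] at h1 h2
  have e1 : Real.log (Real.Gamma (y + 1)) = Real.log (Real.Gamma y) + Real.log y := by
    rw [Real.Gamma_add_one h0.ne', Real.log_mul h0.ne' (Real.Gamma_pos_of_pos h0).ne', add_comm]
  have e2 : Real.log (Real.Gamma (y + 1/2)) =
      Real.log (Real.Gamma (y - 1/2)) + Real.log (y - 1/2) := by
    have hne : y - 1/2 ≠ 0 := by intro h; nlinarith [h]
    have := Real.Gamma_add_one hne
    rw [show y - 1/2 + 1 = y + 1/2 by ring] at this
    rw [this, Real.log_mul hne (Real.Gamma_pos_of_pos (by linarith)).ne', add_comm]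
  have hlog : Real.log y - Real.log (y - 1/2) ≤ (1/2) / (y - 1/2) := by
    rw [← Real.log_div h0.ne' (by linarith : y - 1/2 ≠ 0)]
    have hden : (0:ℝ) < y - 1/2 := by linarith
    have := Real.log_le_sub_one_of_pos (x := y / (y - 1/2)) (div_pos h0 hden)
    have e : y / (y - 1/2) - 1 = (1/2) / (y - 1/2) := by
      rw [div_sub_one hden.ne']
      norm_num
    linarith [e ▸ this]
  have d1 : y + 1 - (y + 1/2) = (1:ℝ)/2 := by ring
  have d2 : y - (y - 1/2) = (1:ℝ)/2 := by ring
  rw [d1] at h1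
  rw [d2] at h2
  -- h1 : digamma (y+1/2) ≤ (log Γ(y+1) - log Γ(y+1/2)) / (1/2)
  -- h2 : (log Γ y - log Γ(y-1/2)) / (1/2) ≤ digamma y
  rw [e1, e2] at h1
  have h1' : digamma (y + 1/2) ≤
      2 * (Real.log (Real.Gamma y) + Real.log y
        - (Real.log (Real.Gamma (y - 1/2)) + Real.log (y - 1/2))) := by
    calc digamma (y + 1/2) ≤ _ := h1
    _ = 2 * (Real.log (Real.Gamma y) + Real.log y
        - (Real.log (Real.Gamma (y - 1/2)) + Real.log (y - 1/2))) := by ring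
  have h2' : 2 * (Real.log (Real.Gamma y) - Real.log (Real.Gamma (y - 1/2))) ≤ digamma y := by
    calc 2 * (Real.log (Real.Gamma y) - Real.log (Real.Gamma (y - 1/2)))
        = (Real.log (Real.Gamma y) - Real.log (Real.Gamma (y - 1/2))) / (1/2) := by ring
    _ ≤ digamma y := h2
  have hpos : (0:ℝ) < y - 1/2 := by linarith
  have : 2 * ((1:ℝ)/2 / (y - 1/2)) = 1 / (y - 1/2) := by ring
  linarith [h1', h2', hlog]


lemma amhm (b : ℝ) (hb : 1/2 < b) : 1/b ≤ 1/2 * (1/(b - 1/2) + 1/(b + 1/2)) := by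
  have h1 : (0:ℝ) < b - 1/2 := by linarith
  have h2 : (0:ℝ) < b + 1/2 := by linarith
  have h0 : (0:ℝ) < b := by linarith
  rw [div_add_div _ _ h1.ne' h2.ne',
    show 1 * (b + 1/2) + (b - 1/2) * 1 = 2*b by ring,
    show 1/2 * (2*b / ((b - 1/2) * (b + 1/2))) = b / ((b - 1/2) * (b + 1/2)) by ring,
    div_le_div_iff₀ h0 (by positivity)]
  nlinarith

set_option maxHeartbeats 1000000 in
/-- For `1 < w ≤ 3`, `ψ((w+1)/2) - ψ(w/2) < 1/w + 2/(w(w+1))`. -/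
theorem digamma_half_diff_upper_of_le_three (w : ℝ) (hw1 : 1 < w) (hw3 : w ≤ 3) :
    digamma ((w + 1) / 2) - digamma (w / 2) < 1 / w + 2 / (w * (w + 1)) := by
  have hw0 : (0:ℝ) < w := by linarith
  -- recurrence instances for the integer-shifted chain
  have r0 : digamma (w/2 + 1) = digamma (w/2) + 1/(w/2) := dg_rec (by linarith)
  have r1 : digamma (w/2 + 2) = digamma (w/2 + 1) + 1/(w/2 + 1) := by
    have h := dg_rec (x := w/2 + 1) (by linarith)
    rwa [show w/2 + 1 + 1 = w/2 + 2 by ring] at h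
  have r2 : digamma (w/2 + 3) = digamma (w/2 + 2) + 1/(w/2 + 2) := by
    have h := dg_rec (x := w/2 + 2) (by linarith)
    rwa [show w/2 + 2 + 1 = w/2 + 3 by ring] at h
  have r3 : digamma (w/2 + 4) = digamma (w/2 + 3) + 1/(w/2 + 3) := by
    have h := dg_rec (x := w/2 + 3) (by linarith)
    rwa [show w/2 + 3 + 1 = w/2 + 4 by ring] at h
  have r4 : digamma (w/2 + 5) = digamma (w/2 + 4) + 1/(w/2 + 4) := by
    have h := dg_rec (x := w/2 + 4) (by linarith)
    rwa [show w/2 + 4 + 1 = w/2 + 5 by ring] at h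
  have r5 : digamma (w/2 + 6) = digamma (w/2 + 5) + 1/(w/2 + 5) := by
    have h := dg_rec (x := w/2 + 5) (by linarith)
    rwa [show w/2 + 5 + 1 = w/2 + 6 by ring] at h
  -- recurrence instances for the half-shifted chain
  have s0 : digamma (w/2 + 3/2) = digamma (w/2 + 1/2) + 1/(w/2 + 1/2) := by
    have h := dg_rec (x := w/2 + 1/2) (by linarith)
    rwa [show w/2 + 1/2 + 1 = w/2 + 3/2 by ring] at h
  have s1 : digamma (w/2 + 5/2) = digamma (w/2 + 3/2) + 1/(w/2 + 3/2) := by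
    have h := dg_rec (x := w/2 + 3/2) (by linarith)
    rwa [show w/2 + 3/2 + 1 = w/2 + 5/2 by ring] at h
  have s2 : digamma (w/2 + 7/2) = digamma (w/2 + 5/2) + 1/(w/2 + 5/2) := by
    have h := dg_rec (x := w/2 + 5/2) (by linarith)
    rwa [show w/2 + 5/2 + 1 = w/2 + 7/2 by ring] at h
  have s3 : digamma (w/2 + 9/2) = digamma (w/2 + 7/2) + 1/(w/2 + 7/2) := by
    have h := dg_rec (x := w/2 + 7/2) (by linarith)
    rwa [show w/2 + 7/2 + 1 = w/2 + 9/2 by ring] at h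
  have s4 : digamma (w/2 + 11/2) = digamma (w/2 + 9/2) + 1/(w/2 + 9/2) := by
    have h := dg_rec (x := w/2 + 9/2) (by linarith)
    rwa [show w/2 + 9/2 + 1 = w/2 + 11/2 by ring] at h
  have s5 : digamma (w/2 + 13/2) = digamma (w/2 + 11/2) + 1/(w/2 + 11/2) := by
    have h := dg_rec (x := w/2 + 11/2) (by linarith)
    rwa [show w/2 + 11/2 + 1 = w/2 + 13/2 by ring] at h
  -- tail bound from convexity
  have ht : digamma (w/2 + 13/2) - digamma (w/2 + 6) ≤ 1/(w/2 + 11/2) := by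
    have h := dg_diff_le (y := w/2 + 6) (by linarith)
    rwa [show w/2 + 6 + 1/2 = w/2 + 13/2 by ring,
      show w/2 + 6 - 1/2 = w/2 + 11/2 by ring] at h
  -- AM-HM instances
  have h1 : 1/(w/2 + 1) ≤ 1/2 * (1/(w/2 + 1/2) + 1/(w/2 + 3/2)) := by
    have h := amhm (w/2 + 1) (by linarith)
    rwa [show w/2 + 1 - 1/2 = w/2 + 1/2 by ring, show w/2 + 1 + 1/2 = w/2 + 3/2 by ring] at h
  have h2 : 1/(w/2 + 2) ≤ 1/2 * (1/(w/2 + 3/2) + 1/(w/2 + 5/2)) := by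
    have h := amhm (w/2 + 2) (by linarith)
    rwa [show w/2 + 2 - 1/2 = w/2 + 3/2 by ring, show w/2 + 2 + 1/2 = w/2 + 5/2 by ring] at h
  have h3 : 1/(w/2 + 3) ≤ 1/2 * (1/(w/2 + 5/2) + 1/(w/2 + 7/2)) := by
    have h := amhm (w/2 + 3) (by linarith)
    rwa [show w/2 + 3 - 1/2 = w/2 + 5/2 by ring, show w/2 + 3 + 1/2 = w/2 + 7/2 by ring] at h
  have h4 : 1/(w/2 + 4) ≤ 1/2 * (1/(w/2 + 7/2) + 1/(w/2 + 9/2)) := by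
    have h := amhm (w/2 + 4) (by linarith)
    rwa [show w/2 + 4 - 1/2 = w/2 + 7/2 by ring, show w/2 + 4 + 1/2 = w/2 + 9/2 by ring] at h
  have h5 : 1/(w/2 + 5) ≤ 1/2 * (1/(w/2 + 9/2) + 1/(w/2 + 11/2)) := by
    have h := amhm (w/2 + 5) (by linarith)
    rwa [show w/2 + 5 - 1/2 = w/2 + 9/2 by ring, show w/2 + 5 + 1/2 = w/2 + 11/2 by ring] at h
  -- final numeric inequality
  have hneed : 1/(w/2) - 1/2 * (1/(w/2 + 1/2)) + 1/2 * (1/(w/2 + 11/2)) + 1/(w/2 + 11/2)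
      - 1/(w/2 + 11/2) < 1/w + 2/(w*(w+1)) := by
    have key : (1/w + 2/(w*(w+1))) - (1/(w/2) - 1/2 * (1/(w/2 + 1/2)) + 1/2 * (1/(w/2 + 11/2)))
        = (11 - w^2) / (w * (w+1) * (w+11)) := by
      field_simp
      ring
    have hpos : (0:ℝ) < (11 - w^2) / (w * (w+1) * (w+11)) := by
      apply div_pos (by nlinarith) (by positivity)
    linarith
  have hgoal : (w + 1)/2 = w/2 + 1/2 := by ring
  rw [hgoal]
  linarith
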